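/- Let p, q ∈ 𝔻² with |p₂| < |p₁|, |q₂| < |q₁|, and m(p₂/p₁, q₂/q₁) < m(p₁, q₁). Then l_{𝔻²}((0,0); p, q) = c_{𝔻²}((0,0); p, q) = log|p₁·q₁|. -/

import Mathlib

open Complex Metric Set


noncomputable def mob (c z : ℂ) : ℂ := (c - z) / (1 - (starRingEnd ℂ) c * z)

lemma mob_denom_ne_zero {c z : ℂ} (h : ‖c‖ * ‖z‖ < 1) :
    (1 : ℂ) - (starRingEnd ℂ) c * z ≠ 0 := by
  intro h0
  have h1 : (starRingEnd ℂ) c * z = 1 := by linear_combination -h0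
  have h2 := congrArg norm h1
  rw [norm_mul, norm_one, Complex.norm_conj] at h2
  linarith

lemma normSq_mob_identity (c z : ℂ) :
    Complex.normSq (1 - (starRingEnd ℂ) c * z) - Complex.normSq (c - z)
      = (1 - Complex.normSq c) * (1 - Complex.normSq z) := by
  simp only [Complex.normSq_apply, Complex.sub_re, Complex.sub_im, Complex.mul_re, Complex.mul_im,
    Complex.one_re, Complex.one_im, Complex.conj_re, Complex.conj_im]
  ring

lemma abs_mob_lt_one {c z : ℂ} (hc : ‖c‖ < 1) (hz : ‖z‖ < 1) :
    ‖mob c z‖ < 1 := by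
  have hd : (1:ℂ) - (starRingEnd ℂ) c * z ≠ 0 :=
    mob_denom_ne_zero (by nlinarith [norm_nonneg c, norm_nonneg z])
  have hdpos : 0 < ‖1 - (starRingEnd ℂ) c * z‖ := norm_pos_iff.mpr hd
  rw [mob, norm_div, div_lt_one hdpos]
  have key := normSq_mob_identity c z
  have hc2 : Complex.normSq c < 1 := by
    rw [← Complex.sq_norm]; nlinarith [norm_nonneg c]
  have hz2 : Complex.normSq z < 1 := by
    rw [← Complex.sq_norm]; nlinarith [norm_nonneg z]
  have h1 : Complex.normSq (c - z) < Complex.normSq (1 - (starRingEnd ℂ) c * z) := by nlinarith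
  refine lt_of_pow_lt_pow_left₀ 2 (norm_nonneg _) ?_
  rw [Complex.sq_norm, Complex.sq_norm]; exact h1

lemma mob_self (c : ℂ) : mob c c = 0 := by simp [mob]

lemma mob_zero (c : ℂ) : mob c 0 = c := by simp [mob]

lemma mob_mob {a b : ℂ} (ha : ‖a‖ < 1) (hb : ‖b‖ < 1) :
    mob a (mob a b) = b := by
  have h1 : (1:ℂ) - (starRingEnd ℂ) a * b ≠ 0 :=
    mob_denom_ne_zero (by nlinarith [norm_nonneg a, norm_nonneg b])
  have h2 : (1:ℂ) - (starRingEnd ℂ) a * a ≠ 0 :=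
    mob_denom_ne_zero (by nlinarith [norm_nonneg a])
  have e1 : a - (a - b)/(1 - (starRingEnd ℂ) a * b)
      = (b * (1 - (starRingEnd ℂ) a * a))/(1 - (starRingEnd ℂ) a * b) := by
    rw [eq_div_iff h1]; simp only [sub_mul, mul_assoc, div_mul_cancel₀ _ h1]; ring
  have e2 : 1 - (starRingEnd ℂ) a * ((a - b)/(1 - (starRingEnd ℂ) a * b))
      = (1 - (starRingEnd ℂ) a * a)/(1 - (starRingEnd ℂ) a * b) := by
    rw [eq_div_iff h1]; simp only [sub_mul, mul_assoc, div_mul_cancel₀ _ h1]; ring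
  rw [mob, mob, e1, e2, div_div_div_eq, mul_comm (1 - (starRingEnd ℂ) a * b)]
  rw [mul_div_mul_right _ _ h1, mul_div_assoc, div_self h2, mul_one]

lemma mob_differentiableAt {c z : ℂ} (h : (1:ℂ) - (starRingEnd ℂ) c * z ≠ 0) :
    DifferentiableAt ℂ (mob c) z := by
  apply DifferentiableAt.div
  · exact (differentiableAt_const c).sub differentiableAt_id
  · exact (differentiableAt_const 1).sub ((differentiableAt_const _).mul differentiableAt_id)
  · exact h


lemma normSq_mob_identity' (c z : ℂ) :
    Complex.normSq (1 - (starRingEnd ℂ) c * z) - Complex.normSq (c - z)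
      = (1 - Complex.normSq c) * (1 - Complex.normSq z) := by
  simp only [Complex.normSq_apply, Complex.sub_re, Complex.sub_im, Complex.mul_re, Complex.mul_im,
    Complex.one_re, Complex.one_im, Complex.conj_re, Complex.conj_im]
  ring

lemma factor_bound {w z : ℂ} {r : ℝ} (hz : ‖z‖ = r) (hr1 : r ≤ 1)
    (hlt : ‖w‖ < r) :
    ‖1 - (starRingEnd ℂ) w * z‖
      ≤ ‖z - w‖ * Real.sqrt (1 + (1 - r^2)/(r - ‖w‖)^2) := by
  set A := ‖1 - (starRingEnd ℂ) w * z‖ with hA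
  set B := ‖z - w‖ with hB
  set K := 1 + (1 - r^2)/(r - ‖w‖)^2 with hK
  have haw : 0 ≤ ‖w‖ := norm_nonneg w
  have hrw : 0 < r - ‖w‖ := by linarith
  have hBge : r - ‖w‖ ≤ B := by
    have h := norm_sub_norm_le z w
    rw [hz] at h
    exact h
  have h1r : 0 ≤ 1 - r^2 := by nlinarith
  have hnz : Complex.normSq z = r^2 := by rw [← Complex.sq_norm, hz]
  have hnw0 : 0 ≤ Complex.normSq w := Complex.normSq_nonneg w
  have hA2 : A^2 = B^2 + (1 - Complex.normSq w) * (1 - r^2) := by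
    have := normSq_mob_identity' w z
    rw [hnz] at this
    have h1 : Complex.normSq (w - z) = Complex.normSq (z - w) := by
      rw [← Complex.normSq_neg]; ring_nf
    rw [hA, hB, Complex.sq_norm, Complex.sq_norm]
    linarith [this, h1]
  have hd0 : 0 ≤ (1 - r^2)/(r - ‖w‖)^2 := div_nonneg h1r (sq_nonneg _)
  have heq : (r - ‖w‖)^2 * ((1 - r^2)/(r - ‖w‖)^2) = 1 - r^2 := by
    field_simp
  have hBpos : 0 < B := lt_of_lt_of_le hrw hBge
  have hA2le : A^2 ≤ B^2 * K := by
    have h2 : (r - ‖w‖)^2 ≤ B^2 := by nlinarith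
    have h3 : 1 - r^2 ≤ B^2 * ((1 - r^2)/(r - ‖w‖)^2) := by nlinarith
    have h4 : (1 - Complex.normSq w) * (1 - r^2) ≤ 1 - r^2 := by nlinarith [mul_nonneg hnw0 h1r]
    rw [hK]; nlinarith
  calc A = Real.sqrt (A^2) := (Real.sqrt_sq (norm_nonneg _)).symm
    _ ≤ Real.sqrt (B^2 * K) := Real.sqrt_le_sqrt hA2le
    _ = B * Real.sqrt K := by
        rw [Real.sqrt_mul (sq_nonneg B), Real.sqrt_sq hBpos.le]

lemma two_zero_bound {g : ℂ → ℂ} {u v : ℂ} (hg : DifferentiableOn ℂ g (ball 0 1))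
    (hmaps : ∀ z ∈ ball (0:ℂ) 1, g z ∈ ball (0:ℂ) 1)
    (hu : ‖u‖ < 1) (hv : ‖v‖ < 1) (huv : u ≠ v)
    (hgu : g u = 0) (hgv : g v = 0) :
    ‖g 0‖ ≤ ‖u‖ * ‖v‖ := by
  rcases eq_or_ne u 0 with rfl | hu0
  · rw [hgu]; simp [mul_nonneg (norm_nonneg _) (norm_nonneg _)]
  rcases eq_or_ne v 0 with rfl | hv0
  · rw [hgv]; simp [mul_nonneg (norm_nonneg _) (norm_nonneg _)]
  have humem : u ∈ ball (0:ℂ) 1 := by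
    rw [mem_ball_zero_iff]; exact hu
  have hvmem : v ∈ ball (0:ℂ) 1 := by
    rw [mem_ball_zero_iff]; exact hv
  set h0 : ℂ → ℂ := dslope (dslope g u) v with hh0
  have hh0d : DifferentiableOn ℂ h0 (ball 0 1) :=
    (Complex.differentiableOn_dslope (isOpen_ball.mem_nhds hvmem)).2
      ((Complex.differentiableOn_dslope (isOpen_ball.mem_nhds humem)).2 hg)
  have hdguv : dslope g u v = 0 := by
    rw [dslope_of_ne _ (Ne.symm huv), slope_def_field, hgu, hgv]; simp
  have heval : ∀ z : ℂ, z ≠ u → z ≠ v → h0 z = g z / ((z - u) * (z - v)) := by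
    intro z hzu hzv
    rw [hh0, dslope_of_ne _ hzv, slope_def_field, hdguv, dslope_of_ne _ hzu, slope_def_field,
      hgu, sub_zero, sub_zero, div_div]
  have h00 : g 0 = h0 0 * (u * v) := by
    rw [heval 0 (Ne.symm hu0) (Ne.symm hv0)]
    have e : ((0:ℂ) - u) * (0 - v) = u * v := by ring
    rw [e, div_mul_cancel₀ _ (mul_ne_zero hu0 hv0)]
  -- bound |h0 0| ≤ 1
  set a := ‖u‖ with hadef
  set b := ‖v‖ with hbdef
  have ha0 : 0 < a := norm_pos_iff.mpr hu0
  have hb0 : 0 < b := norm_pos_iff.mpr hv0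
  set M : ℝ := max a b with hM
  have hM1 : M < 1 := max_lt hu hv
  set C : ℝ → ℝ := fun r =>
    Real.sqrt (1 + (1 - r^2)/(r - a)^2) * Real.sqrt (1 + (1 - r^2)/(r - b)^2) with hC
  have key : ∀ r ∈ Ioo M (1:ℝ), ‖h0 0‖ ≤ C r := by
    intro r hr
    obtain ⟨hrM, hr1⟩ := hr
    have har : a < r := lt_of_le_of_lt (le_max_left a b) hrM
    have hbr : b < r := lt_of_le_of_lt (le_max_right a b) hrM
    have hr0 : 0 < r := lt_trans ha0 har
    set f : ℂ → ℂ := fun z =>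
      h0 z * ((1 - (starRingEnd ℂ) u * z) * (1 - (starRingEnd ℂ) v * z)) with hf
    have hfd : DifferentiableOn ℂ f (closedBall 0 r) := by
      apply DifferentiableOn.mul
      · exact hh0d.mono ((closedBall_subset_ball hr1))
      · apply DifferentiableOn.mul <;>
        · apply DifferentiableOn.sub (differentiableOn_const 1)
          exact (differentiableOn_const _).mul differentiableOn_id
    have hbound : ∀ z ∈ frontier (ball (0:ℂ) r), ‖f z‖ ≤ C r := by
      intro z hzf
      rw [frontier_ball 0 (ne_of_gt hr0)] at hzf
      have hzr : ‖z‖ = r := by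
        rw [mem_sphere_zero_iff_norm] at hzf; exact hzf
      have hzu : z ≠ u := by
        intro h; rw [h] at hzr; exact (ne_of_lt har) hzr
      have hzv : z ≠ v := by
        intro h; rw [h] at hzr; exact (ne_of_lt hbr) hzr
      have hzmem : z ∈ ball (0:ℂ) 1 := by
        rw [mem_ball_zero_iff, hzr]; exact hr1
      have hgz : ‖g z‖ ≤ 1 := by
        have := hmaps z hzmem; rw [mem_ball_zero_iff] at this; linarith
      have hBu : 0 < ‖z - u‖ := norm_pos_iff.mpr (sub_ne_zero.2 hzu)
      have hBv : 0 < ‖z - v‖ := norm_pos_iff.mpr (sub_ne_zero.2 hzv)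
      have hfa : ‖f z‖
          = ‖g z‖ / (‖z - u‖ * ‖z - v‖)
            * (‖1 - (starRingEnd ℂ) u * z‖ *
               ‖1 - (starRingEnd ℂ) v * z‖) := by
        rw [hf]
        simp only [norm_mul]
        rw [heval z hzu hzv, norm_div, norm_mul]
      have fu := factor_bound hzr (le_of_lt hr1) (hadef ▸ har)
      have fv := factor_bound hzr (le_of_lt hr1) (hbdef ▸ hbr)
      rw [hfa, hC]
      set su := Real.sqrt (1 + (1 - r^2)/(r - a)^2) with hsu
      set sv := Real.sqrt (1 + (1 - r^2)/(r - b)^2) with hsv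
      have hsu0 : 0 ≤ su := Real.sqrt_nonneg _
      have hsv0 : 0 ≤ sv := Real.sqrt_nonneg _
      rw [div_mul_eq_mul_div, div_le_iff₀ (by positivity)]
      calc ‖g z‖ * (‖1 - (starRingEnd ℂ) u * z‖ *
              ‖1 - (starRingEnd ℂ) v * z‖)
          ≤ 1 * ((‖z - u‖ * su) * (‖z - v‖ * sv)) := by
            apply mul_le_mul hgz
              (mul_le_mul fu fv (norm_nonneg _) (by positivity))
              (by positivity) one_pos.le
        _ = su * sv * (‖z - u‖ * ‖z - v‖) := by ring
    have hcl : DiffContOnCl ℂ f (ball 0 r) :=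
      DifferentiableOn.diffContOnCl (by rwa [closure_ball (0:ℂ) (ne_of_gt hr0)])
    have hin : (‖h0 0‖ : ℝ) = ‖f 0‖ := by
      rw [hf]; simp
    have h7 := Complex.norm_le_of_forall_mem_frontier_norm_le isBounded_ball hcl hbound
      (subset_closure (mem_ball_self hr0))
    rw [hin]; exact h7
  have hCt : Filter.Tendsto C (nhdsWithin 1 (Iio (1:ℝ))) (nhds 1) := by
    have hca : ContinuousAt C 1 := by
      have hda : ((1:ℝ) - a)^2 ≠ 0 := pow_ne_zero 2 (sub_ne_zero.2 (ne_of_gt hu))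
      have hdb : ((1:ℝ) - b)^2 ≠ 0 := pow_ne_zero 2 (sub_ne_zero.2 (ne_of_gt hv))
      have h1 : ContinuousAt (fun r : ℝ => 1 + (1 - r^2)/(r - a)^2) 1 := by
        apply ContinuousAt.add continuousAt_const
        exact ContinuousAt.div (by fun_prop) (by fun_prop) hda
      have h2 : ContinuousAt (fun r : ℝ => 1 + (1 - r^2)/(r - b)^2) 1 := by
        apply ContinuousAt.add continuousAt_const
        exact ContinuousAt.div (by fun_prop) (by fun_prop) hdb
      exact ((Real.continuous_sqrt.continuousAt.comp h1).mul
        (Real.continuous_sqrt.continuousAt.comp h2))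
    have hC1 : C 1 = 1 := by
      rw [hC]; norm_num
    have := hca.tendsto
    rw [hC1] at this
    exact this.mono_left nhdsWithin_le_nhds
  have hev : ∀ᶠ r in nhdsWithin 1 (Iio (1:ℝ)), ‖h0 0‖ ≤ C r := by
    filter_upwards [Ioo_mem_nhdsLT_of_mem (⟨hM1, le_refl 1⟩ : (1:ℝ) ∈ Ioc M 1)] with r hr
    exact key r hr
  have hh01 : ‖h0 0‖ ≤ 1 := ge_of_tendsto hCt hev
  rw [h00, norm_mul, norm_mul]
  nlinarith [mul_nonneg ha0.le hb0.le]


theorem lempert_eq_caratheodory_one_dim_case (p1 p2 q1 q2 : ℂ)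
    (hp1 : p1 ∈ ball (0 : ℂ) 1) (hp2 : p2 ∈ ball (0 : ℂ) 1)
    (hq1 : q1 ∈ ball (0 : ℂ) 1) (hq2 : q2 ∈ ball (0 : ℂ) 1)
    (hp : ‖p2‖ < ‖p1‖) (hq : ‖q2‖ < ‖q1‖)
    (hm : ‖p2 / p1 - q2 / q1‖ /
        ‖1 - (starRingEnd ℂ) (p2 / p1) * (q2 / q1)‖ <
      ‖p1 - q1‖ / ‖1 - (starRingEnd ℂ) p1 * q1‖) :
    sInf {r : ℝ | ∃ (ψ : ℂ → ℂ × ℂ) (l1 l2 : ℂ),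
        DifferentiableOn ℂ ψ (ball (0 : ℂ) 1) ∧
        (∀ z ∈ ball (0 : ℂ) 1, ψ z ∈ ball (0 : ℂ) 1 ×ˢ ball (0 : ℂ) 1) ∧
        l1 ∈ ball (0 : ℂ) 1 ∧ l2 ∈ ball (0 : ℂ) 1 ∧
        ψ 0 = (0, 0) ∧ ψ l1 = (p1, p2) ∧ ψ l2 = (q1, q2) ∧
        Real.exp r = ‖l1 * l2‖}
      = Real.log ‖p1 * q1‖ ∧
    sSup {r : ℝ | ∃ F : ℂ × ℂ → ℂ,
        DifferentiableOn ℂ F (ball (0 : ℂ) 1 ×ˢ ball (0 : ℂ) 1) ∧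
        (∀ w ∈ ball (0 : ℂ) 1 ×ˢ ball (0 : ℂ) 1, F w ∈ ball (0 : ℂ) 1) ∧
        F (p1, p2) = 0 ∧ F (q1, q2) = 0 ∧
        Real.exp r = ‖F (0, 0)‖}
      = Real.log ‖p1 * q1‖ := by
  have hp1' : ‖p1‖ < 1 := by
    exact mem_ball_zero_iff.1 hp1
  have hq1' : ‖q1‖ < 1 := by
    exact mem_ball_zero_iff.1 hq1
  have hp1pos : 0 < ‖p1‖ := lt_of_le_of_lt (norm_nonneg p2) hp
  have hq1pos : 0 < ‖q1‖ := lt_of_le_of_lt (norm_nonneg q2) hq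
  have hp10 : p1 ≠ 0 := norm_pos_iff.1 hp1pos
  have hq10 : q1 ≠ 0 := norm_pos_iff.1 hq1pos
  set a : ℂ := p2 / p1 with hadef
  set b : ℂ := q2 / q1 with hbdef
  have ha1 : ‖a‖ < 1 := by
    rw [hadef, norm_div, div_lt_one hp1pos]; exact hp
  have hb1 : ‖b‖ < 1 := by
    rw [hbdef, norm_div, div_lt_one hq1pos]; exact hq
  have hRHSpos : 0 < ‖p1 - q1‖ / ‖1 - (starRingEnd ℂ) p1 * q1‖ :=
    lt_of_le_of_lt (div_nonneg (norm_nonneg _) (norm_nonneg _)) hm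
  have hpq : p1 ≠ q1 := by
    intro h; rw [h, sub_self] at hRHSpos; simp at hRHSpos
  have hdenpq : (1:ℂ) - (starRingEnd ℂ) p1 * q1 ≠ 0 :=
    mob_denom_ne_zero (by nlinarith [norm_nonneg p1, norm_nonneg q1])
  have hmobpq : mob p1 q1 ≠ 0 := by
    rw [mob]; exact div_ne_zero (sub_ne_zero.2 hpq) hdenpq
  have hmobpq_pos : 0 < ‖mob p1 q1‖ := norm_pos_iff.mpr hmobpq
  set k : ℂ := mob a b / mob p1 q1 with hkdef
  have hk : ‖k‖ < 1 := by
    have e1 : ‖mob a b‖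
        = ‖a - b‖ / ‖1 - (starRingEnd ℂ) a * b‖ := by
      rw [mob, norm_div]
    have e2 : ‖mob p1 q1‖
        = ‖p1 - q1‖ / ‖1 - (starRingEnd ℂ) p1 * q1‖ := by
      rw [mob, norm_div]
    rw [hkdef, norm_div, div_lt_one hmobpq_pos, e1, e2]
    exact hm
  set h : ℂ → ℂ := fun z => mob a (k * mob p1 z) with hhdef
  have hhlt : ∀ z : ℂ, ‖z‖ < 1 → ‖h z‖ < 1 := by
    intro z hz
    exact abs_mob_lt_one ha1 (by
      rw [norm_mul]
      have h1 := abs_mob_lt_one hp1' hz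
      nlinarith [norm_nonneg k, norm_nonneg (mob p1 z)])
  set ψ : ℂ → ℂ × ℂ := fun z => (z, z * h z) with hψdef
  have hψdiff : DifferentiableOn ℂ ψ (ball (0:ℂ) 1) := by
    intro z hz
    have hz1 : ‖z‖ < 1 := by exact mem_ball_zero_iff.1 hz
    apply DifferentiableAt.differentiableWithinAt
    apply DifferentiableAt.prodMk differentiableAt_id
    apply differentiableAt_id.mul
    have hd1 : DifferentiableAt ℂ (mob p1) z :=
      mob_differentiableAt (mob_denom_ne_zero (by nlinarith [norm_nonneg p1, norm_nonneg z]))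
    have hw : ‖k * mob p1 z‖ < 1 := by
      rw [norm_mul]
      have h1 := abs_mob_lt_one hp1' hz1
      nlinarith [norm_nonneg k, norm_nonneg (mob p1 z)]
    have hd2 : DifferentiableAt ℂ (mob a) (k * mob p1 z) :=
      mob_differentiableAt (mob_denom_ne_zero (by nlinarith [norm_nonneg a, norm_nonneg (k * mob p1 z)]))
    exact DifferentiableAt.comp z hd2 ((differentiableAt_const k).mul hd1)
  have hψmaps : ∀ z ∈ ball (0:ℂ) 1, ψ z ∈ ball (0:ℂ) 1 ×ˢ ball (0:ℂ) 1 := by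
    intro z hz
    have hz1 : ‖z‖ < 1 := by exact mem_ball_zero_iff.1 hz
    refine mem_prod.2 ⟨hz, ?_⟩
    rw [mem_ball_zero_iff, norm_mul]
    have := hhlt z hz1
    nlinarith [norm_nonneg z, norm_nonneg (h z)]
  have hψ0 : ψ 0 = (0, 0) := by
    rw [hψdef]; simp
  have hψp1 : ψ p1 = (p1, p2) := by
    rw [hψdef]
    have hh : h p1 = a := by
      rw [hhdef]; simp only []
      rw [mob_self, mul_zero, mob_zero]
    simp only [hh]
    rw [hadef, mul_comm, div_mul_cancel₀ p2 hp10]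
  have hψq1 : ψ q1 = (q1, q2) := by
    rw [hψdef]
    have hh : h q1 = b := by
      rw [hhdef]; simp only []
      rw [hkdef, div_mul_cancel₀ _ hmobpq]
      exact mob_mob ha1 hb1
    simp only [hh]
    rw [hbdef, mul_comm, div_mul_cancel₀ q2 hq10]
  have habsprod : 0 < ‖p1 * q1‖ := norm_pos_iff.mpr (mul_ne_zero hp10 hq10)
  set L : ℝ := Real.log (‖p1 * q1‖) with hLdef
  have hexpL : Real.exp L = ‖p1 * q1‖ := Real.exp_log habsprod
  constructor
  · -- Lempert
    have hmemL : L ∈ {r : ℝ | ∃ (ψ : ℂ → ℂ × ℂ) (l1 l2 : ℂ),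
        DifferentiableOn ℂ ψ (ball (0 : ℂ) 1) ∧
        (∀ z ∈ ball (0 : ℂ) 1, ψ z ∈ ball (0 : ℂ) 1 ×ˢ ball (0 : ℂ) 1) ∧
        l1 ∈ ball (0 : ℂ) 1 ∧ l2 ∈ ball (0 : ℂ) 1 ∧
        ψ 0 = (0, 0) ∧ ψ l1 = (p1, p2) ∧ ψ l2 = (q1, q2) ∧
        Real.exp r = ‖l1 * l2‖} :=
      ⟨ψ, p1, q1, hψdiff, hψmaps, hp1, hq1, hψ0, hψp1, hψq1, hexpL⟩
    have hlb : ∀ r ∈ {r : ℝ | ∃ (ψ : ℂ → ℂ × ℂ) (l1 l2 : ℂ),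
        DifferentiableOn ℂ ψ (ball (0 : ℂ) 1) ∧
        (∀ z ∈ ball (0 : ℂ) 1, ψ z ∈ ball (0 : ℂ) 1 ×ˢ ball (0 : ℂ) 1) ∧
        l1 ∈ ball (0 : ℂ) 1 ∧ l2 ∈ ball (0 : ℂ) 1 ∧
        ψ 0 = (0, 0) ∧ ψ l1 = (p1, p2) ∧ ψ l2 = (q1, q2) ∧
        Real.exp r = ‖l1 * l2‖}, L ≤ r := by
      rintro r ⟨ψ', l1, l2, hd, hmaps', hl1, hl2, h0, hpl1, hpl2, hexp⟩
      set f : ℂ → ℂ := fun z => (ψ' z).1 with hfdef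
      have hfd : DifferentiableOn ℂ f (ball 0 1) := hd.fst
      have hfm : MapsTo f (ball 0 1) (ball 0 1) := fun z hz => (mem_prod.1 (hmaps' z hz)).1
      have hf0 : f 0 = 0 := by rw [hfdef]; simp only []; rw [h0]
      have hl1' : ‖l1‖ < 1 := by
        exact mem_ball_zero_iff.1 hl1
      have hl2' : ‖l2‖ < 1 := by
        exact mem_ball_zero_iff.1 hl2
      have h1 : ‖p1‖ ≤ ‖l1‖ := by
        have := Complex.norm_le_norm_of_mapsTo_ball hfd (hfm.mono_right ball_subset_closedBall) hf0 hl1'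
        rw [hfdef] at this; simp only [] at this; rw [hpl1] at this; exact this
      have h2 : ‖q1‖ ≤ ‖l2‖ := by
        have := Complex.norm_le_norm_of_mapsTo_ball hfd (hfm.mono_right ball_subset_closedBall) hf0 hl2'
        rw [hfdef] at this; simp only [] at this; rw [hpl2] at this; exact this
      have : Real.exp L ≤ Real.exp r := by
        rw [hexpL, hexp, norm_mul, norm_mul]
        exact mul_le_mul h1 h2 (norm_nonneg q1) (norm_nonneg l1)
      exact Real.exp_le_exp.1 this
    exact le_antisymm (csInf_le ⟨L, fun r hr => hlb r hr⟩ hmemL)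
      (le_csInf ⟨L, hmemL⟩ hlb)
  · -- Caratheodory
    have hmemC : L ∈ {r : ℝ | ∃ F : ℂ × ℂ → ℂ,
        DifferentiableOn ℂ F (ball (0 : ℂ) 1 ×ˢ ball (0 : ℂ) 1) ∧
        (∀ w ∈ ball (0 : ℂ) 1 ×ˢ ball (0 : ℂ) 1, F w ∈ ball (0 : ℂ) 1) ∧
        F (p1, p2) = 0 ∧ F (q1, q2) = 0 ∧
        Real.exp r = ‖F (0, 0)‖} := by
      refine ⟨fun w => mob p1 w.1 * mob q1 w.1, ?_, ?_, ?_, ?_, ?_⟩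
      · intro w hw
        have hw1 : ‖w.1‖ < 1 := by
          exact mem_ball_zero_iff.1 (mem_prod.1 hw).1
        apply DifferentiableAt.differentiableWithinAt
        have d1 : DifferentiableAt ℂ (fun w : ℂ × ℂ => mob p1 w.1) w :=
          DifferentiableAt.comp w (mob_differentiableAt (mob_denom_ne_zero
            (by nlinarith [norm_nonneg p1, norm_nonneg w.1]))) differentiableAt_fst
        have d2 : DifferentiableAt ℂ (fun w : ℂ × ℂ => mob q1 w.1) w :=
          DifferentiableAt.comp w (mob_differentiableAt (mob_denom_ne_zero
            (by nlinarith [norm_nonneg q1, norm_nonneg w.1]))) differentiableAt_fst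
        exact d1.mul d2
      · intro w hw
        have hw1 : ‖w.1‖ < 1 := by
          exact mem_ball_zero_iff.1 (mem_prod.1 hw).1
        rw [mem_ball_zero_iff, norm_mul]
        have e1 := abs_mob_lt_one hp1' hw1
        have e2 := abs_mob_lt_one hq1' hw1
        nlinarith [norm_nonneg (mob p1 w.1), norm_nonneg (mob q1 w.1)]
      · simp only []; rw [mob_self, zero_mul]
      · simp only []; rw [mob_self, mul_zero]
      · simp only []; rw [mob_zero, mob_zero]; exact hexpL
    have hub : ∀ r ∈ {r : ℝ | ∃ F : ℂ × ℂ → ℂ,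
        DifferentiableOn ℂ F (ball (0 : ℂ) 1 ×ˢ ball (0 : ℂ) 1) ∧
        (∀ w ∈ ball (0 : ℂ) 1 ×ˢ ball (0 : ℂ) 1, F w ∈ ball (0 : ℂ) 1) ∧
        F (p1, p2) = 0 ∧ F (q1, q2) = 0 ∧
        Real.exp r = ‖F (0, 0)‖}, r ≤ L := by
      rintro r ⟨F, hFd, hFm, hFp, hFq, hexp⟩
      set g : ℂ → ℂ := F ∘ ψ with hgdef
      have hgd : DifferentiableOn ℂ g (ball 0 1) :=
        hFd.comp hψdiff (fun z hz => hψmaps z hz)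
      have hgm : ∀ z ∈ ball (0:ℂ) 1, g z ∈ ball (0:ℂ) 1 :=
        fun z hz => hFm _ (hψmaps z hz)
      have hgp : g p1 = 0 := by rw [hgdef, Function.comp_apply, hψp1]; exact hFp
      have hgq : g q1 = 0 := by rw [hgdef, Function.comp_apply, hψq1]; exact hFq
      have hg0 : g 0 = F (0, 0) := by rw [hgdef, Function.comp_apply, hψ0]
      have hbd := two_zero_bound hgd hgm hp1' hq1' hpq hgp hgq
      have : Real.exp r ≤ Real.exp L := by
        rw [hexpL, hexp, norm_mul, ← hg0]
        exact hbd
      exact Real.exp_le_exp.1 this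
    exact le_antisymm (csSup_le ⟨L, hmemC⟩ hub)
      (le_csSup ⟨L, fun r hr => hub r hr⟩ hmemC)
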